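/- With F and q as above, let Φ(β,h,p) = F(β,h,q(β),p) where q(β) solves the fixed point equation q = E[tanh²(β(p/2)^{1/2} q^{(p−1)/2} Y + h)] smoothly in β. Then ∂Φ/∂β(β,h,p) = (β/2)(1 − q^p). -/

import Mathlib

open MeasureTheory ProbabilityTheory Real
open scoped ENNReal NNReal

lemma aux_tanh_hasDerivAt (x : ℝ) : HasDerivAt Real.tanh (1 - Real.tanh x ^ 2) x := by
  have h := (Real.hasDerivAt_sinh x).div (Real.hasDerivAt_cosh x) (Real.cosh_pos x).ne'
  have : HasDerivAt Real.tanh ((Real.cosh x * Real.cosh x - Real.sinh x * Real.sinh x) / Real.cosh x ^ 2) x := by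
    have e : Real.tanh = fun y => Real.sinh y / Real.cosh y := funext fun y => Real.tanh_eq_sinh_div_cosh y
    rw [e]; exact h
  convert this using 1
  rw [Real.tanh_eq_sinh_div_cosh]
  field_simp

lemma aux_tanh_abs_le (x : ℝ) : |Real.tanh x| ≤ 1 := by
  rw [Real.tanh_eq_sinh_div_cosh, abs_div, abs_of_pos (Real.cosh_pos x),
    div_le_one (Real.cosh_pos x)]
  nlinarith [Real.cosh_sq_sub_sinh_sq x, abs_nonneg (Real.sinh x), sq_abs (Real.sinh x),
    Real.cosh_pos x]

lemma aux_logcosh_abs (x : ℝ) : |Real.log (Real.cosh x)| ≤ |x| := by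
  have h1 : (0:ℝ) ≤ Real.log (Real.cosh x) :=
    Real.log_nonneg (Real.one_le_cosh x)
  rw [abs_of_nonneg h1]
  have h2 : Real.cosh x ≤ Real.exp |x| := by
    rw [Real.cosh_eq]
    have := Real.exp_le_exp.2 (le_abs_self x)
    have := Real.exp_le_exp.2 (neg_le_abs x)
    linarith
  calc Real.log (Real.cosh x) ≤ Real.log (Real.exp |x|) :=
        Real.log_le_log (Real.cosh_pos x) h2
    _ = |x| := Real.log_exp _

lemma aux_logcosh_hasDerivAt (x : ℝ) :
    HasDerivAt (fun t => Real.log (Real.cosh t)) (Real.tanh x) x := by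
  have h := (Real.hasDerivAt_cosh x).log (Real.cosh_pos x).ne'
  simpa [Real.tanh_eq_sinh_div_cosh] using h

lemma aux_pdf_eq (y : ℝ) :
    gaussianPDFReal 0 1 y = (Real.sqrt (2 * π))⁻¹ * Real.exp (-y ^ 2 / 2) := by
  simp [gaussianPDFReal]

lemma aux_pdf_hasDerivAt (y : ℝ) :
    HasDerivAt (gaussianPDFReal 0 1) (-y * gaussianPDFReal 0 1 y) y := by
  have : (gaussianPDFReal 0 1) = fun x => (Real.sqrt (2 * π))⁻¹ * Real.exp (-x ^ 2 / 2) :=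
    funext fun x => aux_pdf_eq x
  rw [this]
  have h1 : HasDerivAt (fun x : ℝ => -x ^ 2 / 2) (-y) y := by
    have := ((hasDerivAt_pow 2 y).neg).div_const 2
    simpa using this.congr_deriv (by ring)
  have h2 := (h1.exp).const_mul (Real.sqrt (2 * π))⁻¹
  exact h2.congr_deriv (by beta_reduce; ring)

lemma aux_int_conv (f : ℝ → ℝ) :
    ∫ y, f y ∂(gaussianReal 0 1) = ∫ y, f y * gaussianPDFReal 0 1 y := by
  rw [gaussianReal_of_var_ne_zero 0 one_ne_zero]
  have hd : gaussianPDF 0 1 = fun y => ((gaussianPDFReal 0 1 y).toNNReal : ℝ≥0∞) := rfl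
  rw [hd, integral_withDensity_eq_integral_smul
    ((measurable_gaussianPDFReal 0 1).real_toNNReal) f]
  congr 1
  funext y
  rw [NNReal.smul_def, smul_eq_mul, Real.coe_toNNReal _ (gaussianPDFReal_nonneg 0 1 y), mul_comm]

lemma aux_int_bdd {f : ℝ → ℝ} (hf : AEStronglyMeasurable f volume) {C : ℝ}
    (hb : ∀ y, |f y| ≤ C) : Integrable (fun y => f y * gaussianPDFReal 0 1 y) := by
  refine Integrable.mono' ((integrable_gaussianPDFReal 0 1).const_mul C)
      (hf.mul (stronglyMeasurable_gaussianPDFReal 0 1).aestronglyMeasurable) ?_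
  filter_upwards with y
  rw [Real.norm_eq_abs, abs_mul, abs_of_nonneg (gaussianPDFReal_nonneg 0 1 y)]
  exact mul_le_mul_of_nonneg_right (hb y) (gaussianPDFReal_nonneg 0 1 y)

lemma aux_pdf_eq' (y : ℝ) :
    gaussianPDFReal 0 1 y = (Real.sqrt (2 * π))⁻¹ * Real.exp (-y ^ 2 / 2) := by
  simp [gaussianPDFReal]

lemma aux_int_abs : Integrable (fun y => |y| * gaussianPDFReal 0 1 y) := by
  have h0 : Integrable (fun x : ℝ => x * Real.exp (-(1/2) * x ^ 2)) := by
    simpa using integrable_rpow_mul_exp_neg_mul_sq (b := (1:ℝ)/2) (by norm_num)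
      (s := 1) (by norm_num)
  have h1 := (h0.abs).const_mul (Real.sqrt (2 * π))⁻¹
  refine h1.congr ?_
  filter_upwards with y
  rw [abs_mul, abs_of_pos (Real.exp_pos _), aux_pdf_eq',
    show -(1/2) * y ^ 2 = -y ^ 2 / 2 by ring]
  ring

lemma aux_cont_tanh : Continuous Real.tanh :=
  (Differentiable.continuous (fun x => (aux_tanh_hasDerivAt x).differentiableAt))

lemma aux_cont_pdf : Continuous (gaussianPDFReal 0 1) := by
  have : gaussianPDFReal 0 1 = fun y => (Real.sqrt (2 * π))⁻¹ * Real.exp (-y ^ 2 / 2) :=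
    funext aux_pdf_eq'
  rw [this]; continuity

lemma aux_affine_deriv (a c y : ℝ) : HasDerivAt (fun y : ℝ => a * y + c) a y := by
  simpa using ((hasDerivAt_id y).const_mul a).add_const c

lemma aux_sq_le (x : ℝ) : |1 - Real.tanh x ^ 2| ≤ 1 := by
  have h1 := aux_tanh_abs_le x
  have h2 : Real.tanh x ^ 2 ≤ 1 := by nlinarith [abs_nonneg (Real.tanh x), sq_abs (Real.tanh x)]
  have h3 : (0:ℝ) ≤ Real.tanh x ^ 2 := sq_nonneg _
  rw [abs_le]; constructor <;> linarith

lemma aux_stein (a c : ℝ) :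
    ∫ y, y * Real.tanh (a * y + c) * gaussianPDFReal 0 1 y =
      a * ∫ y, (1 - Real.tanh (a * y + c) ^ 2) * gaussianPDFReal 0 1 y := by
  set pdf := gaussianPDFReal 0 1 with hpdf
  have hG : ∀ y, HasDerivAt (fun y => Real.tanh (a * y + c) * pdf y)
      (a * (1 - Real.tanh (a * y + c) ^ 2) * pdf y
        + Real.tanh (a * y + c) * (-y * pdf y)) y := by
    intro y
    have ht : HasDerivAt (fun y => Real.tanh (a * y + c))
        ((1 - Real.tanh (a * y + c) ^ 2) * a) y :=
      by have := (aux_tanh_hasDerivAt (a * y + c)).comp y (aux_affine_deriv a c y); exact this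
    have := ht.mul (aux_pdf_hasDerivAt y)
    exact this.congr_deriv (by ring)
  have m1 : AEStronglyMeasurable (fun y => a * (1 - Real.tanh (a * y + c) ^ 2)) volume := by
    exact (continuous_const.mul (continuous_const.sub
      ((aux_cont_tanh.comp (by continuity)).pow 2))).aestronglyMeasurable
  have I1 : Integrable (fun y => a * (1 - Real.tanh (a * y + c) ^ 2) * pdf y) := by
    refine aux_int_bdd m1 (C := |a|) fun y => ?_
    rw [abs_mul]
    calc |a| * |1 - Real.tanh (a * y + c) ^ 2| ≤ |a| * 1 :=
          mul_le_mul_of_nonneg_left (aux_sq_le _) (abs_nonneg a)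
      _ = |a| := mul_one _
  have I2 : Integrable (fun y => Real.tanh (a * y + c) * (-y * pdf y)) := by
    refine Integrable.mono' aux_int_abs ?_ ?_
    · apply Continuous.aestronglyMeasurable
      exact (aux_cont_tanh.comp (by continuity)).mul ((continuous_id.neg).mul aux_cont_pdf)
    · filter_upwards with y
      rw [Real.norm_eq_abs, abs_mul, abs_mul, abs_neg, abs_of_nonneg (gaussianPDFReal_nonneg 0 1 y)]
      calc |Real.tanh (a * y + c)| * (|y| * pdf y) ≤ 1 * (|y| * pdf y) :=
            mul_le_mul_of_nonneg_right (aux_tanh_abs_le _)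
              (mul_nonneg (abs_nonneg y) (gaussianPDFReal_nonneg 0 1 y))
        _ = |y| * pdf y := one_mul _
  have IG : Integrable (fun y => Real.tanh (a * y + c) * pdf y) := by
    refine aux_int_bdd ?_ (C := 1) fun y => aux_tanh_abs_le _
    exact (aux_cont_tanh.comp (by continuity)).aestronglyMeasurable
  have hzero := integral_eq_zero_of_hasDerivAt_of_integrable hG (I1.add I2) IG
  rw [integral_add I1 I2] at hzero
  have e2 : (fun y => Real.tanh (a * y + c) * (-y * pdf y))
      = fun y => -(y * Real.tanh (a * y + c) * pdf y) := funext fun y => by ring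
  rw [e2, integral_neg] at hzero
  have e1 : (fun y => a * (1 - Real.tanh (a * y + c) ^ 2) * pdf y)
      = fun y => a * ((1 - Real.tanh (a * y + c) ^ 2) * pdf y) := funext fun y => by ring
  rw [e1, integral_const_mul] at hzero
  linarith

lemma aux_int_gauss {f : ℝ → ℝ} (hf : AEStronglyMeasurable f volume)
    (hvol : Integrable (fun y => f y * gaussianPDFReal 0 1 y)) :
    Integrable f (gaussianReal 0 1) := by
  rw [gaussianReal_of_var_ne_zero 0 one_ne_zero,
    integrable_withDensity_iff (measurable_gaussianPDF 0 1)
      (ae_of_all _ fun x => ENNReal.ofReal_lt_top)]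
  refine hvol.congr (ae_of_all _ fun y => ?_)
  simp only [gaussianPDF_def, ENNReal.toReal_ofReal (gaussianPDFReal_nonneg 0 1 y)]

lemma aux_int_abs_gauss : Integrable (fun y => |y|) (gaussianReal 0 1) :=
  aux_int_gauss continuous_abs.aestronglyMeasurable aux_int_abs

lemma aux_cont_logcosh : Continuous (fun x => Real.log (Real.cosh x)) :=
  Differentiable.continuous fun x => (aux_logcosh_hasDerivAt x).differentiableAt

lemma aux_param (a c : ℝ) :
    HasDerivAt (fun t => ∫ y, Real.log (Real.cosh (t * y + c)) ∂(gaussianReal 0 1))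
      (∫ y, y * Real.tanh (a * y + c) ∂(gaussianReal 0 1)) a := by
  have key := hasDerivAt_integral_of_dominated_loc_of_deriv_le
    (F := fun t y => Real.log (Real.cosh (t * y + c)))
    (F' := fun t y => y * Real.tanh (t * y + c))
    (x₀ := a) (μ := gaussianReal 0 1) (bound := fun y => |y|)
    (s := Metric.ball a 1) (Metric.ball_mem_nhds a one_pos)
    ?_ ?_ ?_ ?_ ?_ ?_
  · exact key.2
  · filter_upwards with t
    exact (aux_cont_logcosh.comp (by continuity)).aestronglyMeasurable
  · refine aux_int_gauss (aux_cont_logcosh.comp (by continuity)).aestronglyMeasurable ?_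
    refine Integrable.mono'
      (((integrable_gaussianPDFReal 0 1).const_mul |c|).add (aux_int_abs.const_mul |a|))
      ((aux_cont_logcosh.comp (by continuity)).aestronglyMeasurable.mul
        (stronglyMeasurable_gaussianPDFReal 0 1).aestronglyMeasurable) ?_
    filter_upwards with y
    have hp := gaussianPDFReal_nonneg 0 1 y
    rw [Real.norm_eq_abs, abs_mul, abs_of_nonneg hp]
    have h1 : |Real.log (Real.cosh (a * y + c))| ≤ |a| * |y| + |c| := by
      calc |Real.log (Real.cosh (a * y + c))| ≤ |a * y + c| := aux_logcosh_abs _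
        _ ≤ |a * y| + |c| := abs_add_le _ _
        _ = |a| * |y| + |c| := by rw [abs_mul]
    calc |Real.log (Real.cosh (a * y + c))| * gaussianPDFReal 0 1 y
        ≤ (|a| * |y| + |c|) * gaussianPDFReal 0 1 y := mul_le_mul_of_nonneg_right h1 hp
      _ = |c| * gaussianPDFReal 0 1 y + |a| * (|y| * gaussianPDFReal 0 1 y) := by ring
  · exact (continuous_id.mul (aux_cont_tanh.comp (by continuity))).aestronglyMeasurable
  · filter_upwards with y
    intro t _
    rw [Real.norm_eq_abs, abs_mul]
    calc |y| * |Real.tanh (t * y + c)| ≤ |y| * 1 :=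
          mul_le_mul_of_nonneg_left (aux_tanh_abs_le _) (abs_nonneg y)
      _ = |y| := mul_one _
  · exact aux_int_abs_gauss
  · filter_upwards with y
    intro t _
    have hu : HasDerivAt (fun t : ℝ => t * y + c) y t := by
      simpa using (hasDerivAt_mul_const y (x := t)).add_const c
    have := (aux_logcosh_hasDerivAt (t * y + c)).comp t hu
    exact this.congr_deriv (by ring)

lemma aux_stein_gauss (a c : ℝ) :
    ∫ y, y * Real.tanh (a * y + c) ∂(gaussianReal 0 1)
      = a * (1 - ∫ y, Real.tanh (a * y + c) ^ 2 ∂(gaussianReal 0 1)) := by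
  rw [aux_int_conv, aux_int_conv, aux_stein]
  congr 1
  have I2 : Integrable (fun y => Real.tanh (a * y + c) ^ 2 * gaussianPDFReal 0 1 y) := by
    refine aux_int_bdd ((aux_cont_tanh.comp (by continuity)).pow 2).aestronglyMeasurable
      (C := 1) fun y => ?_
    rw [abs_pow]
    calc |Real.tanh (a * y + c)| ^ 2 ≤ 1 ^ 2 :=
          pow_le_pow_left₀ (abs_nonneg _) (aux_tanh_abs_le _) 2
      _ = 1 := one_pow 2
  have e1 : (fun y => (1 - Real.tanh (a * y + c) ^ 2) * gaussianPDFReal 0 1 y)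
      = fun y => gaussianPDFReal 0 1 y - Real.tanh (a * y + c) ^ 2 * gaussianPDFReal 0 1 y :=
    funext fun y => by ring
  rw [e1, integral_sub (integrable_gaussianPDFReal 0 1) I2,
    integral_gaussianPDFReal_eq_one 0 one_ne_zero]

theorem stmt_18 (p : ℕ) (hp : 2 ≤ p) (h : ℝ) (hh : 0 < h) (q : ℝ → ℝ) (β : ℝ) (hβ : 0 < β)
    (hq01 : ∀ b, q b ∈ Set.Icc (0 : ℝ) 1)
    (hqd : DifferentiableAt ℝ q β)
    (hfix : ∀ b : ℝ, q b =
      ∫ y, Real.tanh (b * Real.sqrt ((p : ℝ) / 2) * (q b) ^ (((p : ℝ) - 1) / 2) * y + h) ^ 2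
        ∂(gaussianReal 0 1)) :
    HasDerivAt (fun b : ℝ =>
      b ^ 2 / 4 * (1 - (p : ℝ) * (q b) ^ (p - 1) + ((p : ℝ) - 1) * (q b) ^ p) + Real.log 2
        + ∫ y, Real.log
            (Real.cosh (b * Real.sqrt ((p : ℝ) / 2) * (q b) ^ (((p : ℝ) - 1) / 2) * y + h))
            ∂(gaussianReal 0 1))
      (β / 2 * (1 - (q β) ^ p)) β := by
  obtain ⟨n, rfl⟩ : ∃ n, p = n + 2 := ⟨p - 2, by omega⟩
  have hp2 : (2:ℝ) ≤ ((n + 2 : ℕ) : ℝ) := by push_cast; linarith [Nat.cast_nonneg (α := ℝ) n]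
  set s : ℝ := Real.sqrt (((n + 2 : ℕ) : ℝ) / 2) with hs
  set e : ℝ := (((n + 2 : ℕ) : ℝ) - 1) / 2 with he
  -- positivity of q β
  have hQpos : 0 < q β := by
    rcases (hq01 β).1.lt_or_eq with h' | h'
    · exact h'
    have he0 : e ≠ 0 := by
      have hn0 := Nat.cast_nonneg (α := ℝ) n
      rw [he]; push_cast; intro hcon; linarith
    have hz : (q β : ℝ) ^ e = 0 := by rw [← h', Real.zero_rpow he0]
    have hfβ := hfix β
    rw [hz] at hfβ
    simp only [mul_zero, zero_mul, zero_add] at hfβ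
    rw [integral_const] at hfβ
    simp only [measure_univ, ENNReal.toReal_one, probReal_univ, smul_eq_mul, one_mul] at hfβ
    have htpos : 0 < Real.tanh h := by
      rw [Real.tanh_eq_sinh_div_cosh]
      exact div_pos (Real.sinh_pos_iff.2 hh) (Real.cosh_pos h)
    nlinarith
  -- derivative of the rpow factor
  have hq := hqd.hasDerivAt
  have hr : HasDerivAt (fun b => (q b) ^ e) (deriv q β * e * q β ^ (e - 1)) β :=
    hq.rpow_const (Or.inl hQpos.ne')
  -- derivative of c b = b * s * (q b) ^ e
  have hc : HasDerivAt (fun b => b * s * (q b) ^ e)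
      (s * q β ^ e + β * s * (deriv q β * e * q β ^ (e - 1))) β := by
    have h1 : HasDerivAt (fun b : ℝ => b * s) s β := hasDerivAt_mul_const s
    exact h1.mul hr
  -- derivative of the integral term
  have hA := aux_param (β * s * q β ^ e) h
  have hcomp := hA.comp β hc
  simp only [Function.comp_def] at hcomp
  -- polynomial part
  have hn1 : HasDerivAt (fun b => (q b) ^ (n + 1)) (((n:ℝ) + 1) * q β ^ n * deriv q β) β := by
    have := hq.pow (n + 1)
    exact this.congr_deriv (by simp)
  have hn2 : HasDerivAt (fun b => (q b) ^ (n + 2)) (((n:ℝ) + 2) * q β ^ (n + 1) * deriv q β) β := by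
    have := hq.pow (n + 2)
    exact this.congr_deriv (by simp)
  have hin : HasDerivAt (fun b => 1 - ((n + 2 : ℕ) : ℝ) * (q b) ^ (n + 1)
        + (((n + 2 : ℕ) : ℝ) - 1) * (q b) ^ (n + 2))
      (-(((n + 2 : ℕ) : ℝ) * (((n:ℝ) + 1) * q β ^ n * deriv q β))
        + (((n + 2 : ℕ) : ℝ) - 1) * (((n:ℝ) + 2) * q β ^ (n + 1) * deriv q β)) β := by
    have := ((hasDerivAt_const β (1:ℝ)).sub (hn1.const_mul (((n + 2 : ℕ) : ℝ)))).add
      (hn2.const_mul ((((n + 2 : ℕ) : ℝ) - 1)))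
    exact this.congr_deriv (by ring)
  have hsq : HasDerivAt (fun b : ℝ => b ^ 2 / 4) (β / 2) β := by
    have := (hasDerivAt_pow 2 β).div_const 4
    exact this.congr_deriv (by push_cast; ring)
  have hpoly := hsq.mul hin
  have htotal := ((hpoly.add_const (Real.log 2)).add hcomp)
  have hsub : (n + 2) - 1 = n + 1 := rfl
  rw [hsub]
  refine htotal.congr_deriv (Eq.symm ?_)
  -- now the value computation
  have hstein := aux_stein_gauss (β * s * q β ^ e) h
  have hfixβ := hfix β
  rw [← hfixβ] at hstein
  rw [hstein]
  have hE1 : q β ^ e * q β ^ e = q β ^ (n + 1) := by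
    rw [← Real.rpow_add hQpos]
    have h2 : e + e = ((n + 1 : ℕ) : ℝ) := by rw [he]; push_cast; ring
    rw [h2, Real.rpow_natCast]
  have hE2 : q β ^ e * q β ^ (e - 1) = q β ^ n := by
    rw [← Real.rpow_add hQpos]
    have h2 : e + (e - 1) = ((n : ℕ) : ℝ) := by rw [he]; push_cast; ring
    rw [h2, Real.rpow_natCast]
  have hss : s * s = ((n + 2 : ℕ) : ℝ) / 2 := by
    rw [hs]
    exact Real.mul_self_sqrt (by positivity)
  push_cast at hE1 hE2 hss he ⊢
  linear_combination (exp := 1)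
    (-(1 - q β) * (β * (q β ^ e * q β ^ e) + β ^ 2 * e * deriv q β * (q β ^ e * q β ^ (e - 1)))) * hss
    + (-(1 - q β) * β * ((((n:ℝ) + 2)) / 2)) * hE1
    + (-(1 - q β) * β ^ 2 * e * deriv q β * ((((n:ℝ) + 2)) / 2)) * hE2
    + (-(1 - q β) * β ^ 2 * deriv q β * q β ^ n * ((((n:ℝ) + 2)) / 2)) * he
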